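/- Suppose weak orders ≿₁, ≿₂ rationalize a dataset in the sophisticated sense, and define R₂ by x^k R₂ x^s iff x^k ≠ x^s and x^s ∈ B^k(x₁^k). Then x^k R₂ x^s implies either x^k ≻₂ x^s, or (x^k ∼₂ x^s and x^k ≻₁ x^s); consequently R₂ is acyclic (N-SARP holds). -/

import Mathlib

def maxSet {X : Type} (S : Set X) (pref : X → X → Prop) : Set X :=
  {x | x ∈ S ∧ ∀ y ∈ S, pref x y}

def WeakOrder {X : Type} (pref : X → X → Prop) : Prop :=
  (∀ a b, pref a b ∨ pref b a) ∧ Transitive pref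

def sec1 {X₁ X₂ : Type} (B : Set (X₁ × X₂)) (a : X₁) : Set (X₁ × X₂) :=
  {y ∈ B | y.1 = a}

def sec2 {X₁ X₂ : Type} (B : Set (X₁ × X₂)) (b : X₂) : Set (X₁ × X₂) :=
  {y ∈ B | y.2 = b}

def NSARP {K X₁ X₂ : Type} (x : K → X₁ × X₂) (B : K → Set (X₁ × X₂)) : Prop :=
  ¬ ∃ (L : ℕ) (k : Fin (L + 1) → K), ∀ l : Fin (L + 1),
      x (k l) ≠ x (k (l + 1)) ∧ x (k l) ∈ sec1 (B (k (l + 1))) (x (k (l + 1))).1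

def NNSARP {K X₁ X₂ : Type} (x : K → X₁ × X₂) (B : K → Set (X₁ × X₂)) : Prop :=
  ¬ ∃ (L : ℕ) (k : Fin (L + 1) → K), ∀ l : Fin (L + 1),
      x (k l) ≠ x (k (l + 1)) ∧ x (k l) ∈ sec2 (B (k (l + 1))) (x (k (l + 1))).2

def Cond1 {K X₁ X₂ : Type} (x : K → X₁ × X₂) (B : K → Set (X₁ × X₂)) : Prop :=
  ∀ S : Set K, S.Nonempty →
    ¬ (⋃ k ∈ S, sec1 (B k) (x k).1) ⊆ ⋃ k ∈ S, (B k \ sec1 (B k) (x k).1)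

def Cond2 {K X₁ X₂ : Type} (x : K → X₁ × X₂) (B : K → Set (X₁ × X₂)) : Prop :=
  ¬ ∃ (L : ℕ) (k : Fin (L + 1) → K), ∀ l : Fin (L + 1),
      x (k l) ≠ x (k (l + 1)) ∧ x (k l) ∈ sec1 (B (k (l + 1))) (x (k l)).1 ∧
      sec1 (B (k (l + 1))) (x (k l)).1 ⊆ sec1 (B (k l)) (x (k l)).1

def NaiveRat {K X₁ X₂ : Type} (x : K → X₁ × X₂) (B : K → Set (X₁ × X₂)) : Prop :=
  ∃ p1 p2 : X₁ × X₂ → X₁ × X₂ → Prop, WeakOrder p1 ∧ WeakOrder p2 ∧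
    ∀ k, (∃ z, maxSet (B k) p1 = {z} ∧ z ∈ sec1 (B k) (x k).1) ∧
      maxSet (sec1 (B k) (x k).1) p2 = {x k}

def NaiveNashRat {K X₁ X₂ : Type} (x : K → X₁ × X₂) (B : K → Set (X₁ × X₂)) : Prop :=
  ∃ p1 p2 : X₁ × X₂ → X₁ × X₂ → Prop, WeakOrder p1 ∧ WeakOrder p2 ∧
    ∀ k, x k ∈ maxSet (sec2 (B k) (x k).2) p1 ∧
      maxSet (sec1 (B k) (x k).1) p2 = {x k}

def StrictNaiveNashRat {K X₁ X₂ : Type} (x : K → X₁ × X₂) (B : K → Set (X₁ × X₂)) : Prop :=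
  ∃ p1 p2 : X₁ × X₂ → X₁ × X₂ → Prop, WeakOrder p1 ∧ WeakOrder p2 ∧
    ∀ k, maxSet (sec2 (B k) (x k).2) p1 = {x k} ∧
      maxSet (sec1 (B k) (x k).1) p2 = {x k}

def SophRat {K X₁ X₂ : Type} (x : K → X₁ × X₂) (B : K → Set (X₁ × X₂)) : Prop :=
  ∃ p1 p2 : X₁ × X₂ → X₁ × X₂ → Prop, WeakOrder p1 ∧ WeakOrder p2 ∧
    ∀ k, maxSet (⋃ a ∈ Prod.fst '' B k, maxSet (sec1 (B k) a) p2) p1 = {x k}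

lemma lexQ_trans {X : Type} {p1 p2 : X → X → Prop}
    (hw1 : WeakOrder p1) (hw2 : WeakOrder p2) {a b c : X}
    (hab : (p2 a b ∧ ¬ p2 b a) ∨ ((p2 a b ∧ p2 b a) ∧ (p1 a b ∧ ¬ p1 b a)))
    (hbc : (p2 b c ∧ ¬ p2 c b) ∨ ((p2 b c ∧ p2 c b) ∧ (p1 b c ∧ ¬ p1 c b))) :
    (p2 a c ∧ ¬ p2 c a) ∨ ((p2 a c ∧ p2 c a) ∧ (p1 a c ∧ ¬ p1 c a)) := by
  have ht1 := hw1.2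
  have ht2 := hw2.2
  rcases hab with ⟨h1, h2⟩ | ⟨⟨h1, h1'⟩, h3, h4⟩ <;>
    rcases hbc with ⟨g1, g2⟩ | ⟨⟨g1, g1'⟩, g3, g4⟩
  · exact Or.inl ⟨ht2 h1 g1, fun hca => g2 (ht2 hca h1)⟩
  · exact Or.inl ⟨ht2 h1 g1, fun hca => h2 (ht2 g1 hca)⟩
  · exact Or.inl ⟨ht2 h1 g1, fun hca => g2 (ht2 hca h1)⟩
  · exact Or.inr ⟨⟨ht2 h1 g1, ht2 g1' h1'⟩, ht1 h3 g3, fun hca => g4 (ht1 hca h3)⟩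

theorem R2_implies_pref_and_acyclic
    {K X₁ X₂ : Type} [Fintype K]
    (x : K → X₁ × X₂) (B : K → Set (X₁ × X₂)) (hmem : ∀ k, x k ∈ B k)
    (p1 p2 : X₁ × X₂ → X₁ × X₂ → Prop)
    (hw1 : WeakOrder p1) (hw2 : WeakOrder p2)
    (hrat : ∀ k, maxSet (⋃ a ∈ Prod.fst '' B k, maxSet (sec1 (B k) a) p2) p1 = {x k}) :
    let R2 : K → K → Prop := fun k s => x k ≠ x s ∧ x s ∈ sec1 (B k) (x k).1
    (∀ k s, R2 k s →
        ((p2 (x k) (x s) ∧ ¬ p2 (x s) (x k)) ∨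
          ((p2 (x k) (x s) ∧ p2 (x s) (x k)) ∧ (p1 (x k) (x s) ∧ ¬ p1 (x s) (x k))))) ∧
      ¬ ∃ (L : ℕ) (c : Fin (L + 1) → K), ∀ l : Fin (L + 1), R2 (c l) (c (l + 1)) := by
  intro R2
  have hmax : ∀ k, x k ∈ maxSet (⋃ a ∈ Prod.fst '' B k, maxSet (sec1 (B k) a) p2) p1 := by
    intro k
    have : x k ∈ ({x k} : Set (X₁ × X₂)) := rfl
    rwa [← hrat k] at this
  have hmax2 : ∀ k, x k ∈ maxSet (sec1 (B k) (x k).1) p2 := by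
    intro k
    have h := (hmax k).1
    rw [Set.mem_iUnion₂] at h
    obtain ⟨a, _, hx⟩ := h
    have : (x k).1 = a := hx.1.2
    rwa [this]
  have key : ∀ k s, R2 k s →
      ((p2 (x k) (x s) ∧ ¬ p2 (x s) (x k)) ∨
        ((p2 (x k) (x s) ∧ p2 (x s) (x k)) ∧ (p1 (x k) (x s) ∧ ¬ p1 (x s) (x k)))) := by
    intro k s hR
    replace hR : x k ≠ x s ∧ x s ∈ sec1 (B k) (x k).1 := hR
    have hp2ks : p2 (x k) (x s) := (hmax2 k).2 (x s) hR.2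
    by_cases hsk : p2 (x s) (x k)
    · have hUs : x s ∈ ⋃ a ∈ Prod.fst '' B k, maxSet (sec1 (B k) a) p2 := by
        rw [Set.mem_iUnion₂]
        exact ⟨(x k).1, ⟨x k, hmem k, rfl⟩,
          ⟨hR.2, fun y hy => hw2.2 hsk ((hmax2 k).2 y hy)⟩⟩
      have hp1ks : p1 (x k) (x s) := (hmax k).2 (x s) hUs
      have hnp1sk : ¬ p1 (x s) (x k) := by
        intro h
        have : x s ∈ maxSet (⋃ a ∈ Prod.fst '' B k, maxSet (sec1 (B k) a) p2) p1 :=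
          ⟨hUs, fun y hy => hw1.2 h ((hmax k).2 y hy)⟩
        rw [hrat k] at this
        exact hR.1 this.symm
      exact Or.inr ⟨⟨hp2ks, hsk⟩, hp1ks, hnp1sk⟩
    · exact Or.inl ⟨hp2ks, hsk⟩
  refine ⟨key, ?_⟩
  rintro ⟨L, c, hc⟩
  set Q : X₁ × X₂ → X₁ × X₂ → Prop := fun a b =>
    (p2 a b ∧ ¬ p2 b a) ∨ ((p2 a b ∧ p2 b a) ∧ (p1 a b ∧ ¬ p1 b a)) with hQ
  open Fin.NatCast Fin.CommRing in
  have hchain : ∀ n : ℕ, Q (x (c 0)) (x (c ((n + 1 : ℕ) : Fin (L + 1)))) := by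
    intro n
    induction n with
    | zero =>
      have e : ((0 + 1 : ℕ) : Fin (L + 1)) = (0 : Fin (L + 1)) + 1 := by push_cast; ring
      rw [e]; exact key _ _ (hc 0)
    | succ m ih =>
      have step := key _ _ (hc ((m + 1 : ℕ) : Fin (L + 1)))
      have : ((m + 1 + 1 : ℕ) : Fin (L + 1)) = ((m + 1 : ℕ) : Fin (L + 1)) + 1 := by
        push_cast; ring
      rw [this]
      exact lexQ_trans hw1 hw2 ih step
  have hfin := hchain L
  open Fin.NatCast Fin.CommRing in
  have : ((L + 1 : ℕ) : Fin (L + 1)) = 0 := by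
    simp [Fin.natCast_self]
  rw [this] at hfin
  rcases hfin with ⟨h1, h2⟩ | ⟨_, h3, h4⟩
  · exact h2 h1
  · exact h4 h3
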